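/- The cascade map G has at least one fixed point in [0,1]^ℕ: there exists a^∞ ∈ [0,1]^ℕ with G_j(a^∞) = a^∞_j for every j ∈ ℕ. -/

import Mathlib

/-- In-degree marginal `P⁺_k = Σ_j P_{jk}` of the node-type distribution. -/
noncomputable def Pplus (P : ℕ → ℕ → ℝ) (k : ℕ) : ℝ := ∑' j, P j k

/-- In-degree marginal `Q⁻_j = Σ_k Q_{kj}` of the edge-type distribution. -/
noncomputable def Qminus (Q : ℕ → ℕ → ℝ) (j : ℕ) : ℝ := ∑' k, Q k j

/-- Initially defaulted edge fractions `σ⁰_{kj} = Σ_{j'} ρ⁰_{j'k} P_{j'k} / P⁺_k`. -/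
noncomputable def sigma0 (P ρ0 : ℕ → ℕ → ℝ) (k : ℕ) : ℝ :=
  (∑' j', ρ0 j' k * P j' k) / Pplus P k

/-- Binomial tail `Σ_{m=M}^{j} C(j,m) x^m (1−x)^{j−m}`. -/
noncomputable def binomialTail (j M : ℕ) (x : ℝ) : ℝ :=
  ∑ m ∈ Finset.Icc M j, (j.choose m : ℝ) * x ^ m * (1 - x) ^ (j - m)

/-- The cascade map `G` of the extended Gai–Kapadia model:
`G_j(a) = (1/Q⁻_j) Σ_k Q_{kj} [σ⁰_{kj} + Σ_{j'} (1−ρ⁰_{j'k}) (P_{j'k}/P⁺_k)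
  Σ_{m=M_{j'k}}^{j'} C(j',m) a_{j'}^m (1−a_{j'})^{j'−m}]`. -/
noncomputable def cascadeMap (P Q ρ0 : ℕ → ℕ → ℝ) (M : ℕ → ℕ → ℕ)
    (a : ℕ → ℝ) (j : ℕ) : ℝ :=
  (1 / Qminus Q j) * ∑' k, Q k j * (sigma0 P ρ0 k +
    ∑' j', (1 - ρ0 j' k) * (P j' k / Pplus P k) * binomialTail j' (M j' k) (a j'))

lemma binomialTail_eq_eval (j M : ℕ) (x : ℝ) :
    binomialTail j M x = (∑ m ∈ Finset.Icc M j, bernsteinPolynomial ℝ j m).eval x := by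
  simp [binomialTail, bernsteinPolynomial, Polynomial.eval_finset_sum]

lemma binomialTail_nonneg {j M : ℕ} {x : ℝ} (hx : x ∈ Set.Icc (0:ℝ) 1) :
    0 ≤ binomialTail j M x := by
  have h1 : (0:ℝ) ≤ 1 - x := by linarith [hx.2]
  have hx0 := hx.1
  refine Finset.sum_nonneg fun m _ => ?_
  positivity

lemma binomialTail_le_one {j M : ℕ} {x : ℝ} (hx : x ∈ Set.Icc (0:ℝ) 1) :
    binomialTail j M x ≤ 1 := by
  have h1 : (0:ℝ) ≤ 1 - x := by linarith [hx.2]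
  have hx0 := hx.1
  have hsub : Finset.Icc M j ⊆ Finset.range (j+1) := by
    intro m hm
    simp only [Finset.mem_Icc] at hm
    simp only [Finset.mem_range]; omega
  calc binomialTail j M x ≤ ∑ m ∈ Finset.range (j+1), (j.choose m : ℝ) * x ^ m * (1 - x) ^ (j - m) := by
        apply Finset.sum_le_sum_of_subset_of_nonneg hsub
        intro m _ _; positivity
    _ = (x + (1 - x)) ^ j := by
        rw [add_pow]; apply Finset.sum_congr rfl; intro m _; ring
    _ = 1 := by norm_num

lemma tail_derivative (j M : ℕ) (hM : 1 ≤ M) (hMj : M ≤ j) :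
    Polynomial.derivative (∑ m ∈ Finset.Icc M j, bernsteinPolynomial ℝ j m)
      = (j : Polynomial ℝ) * bernsteinPolynomial ℝ (j-1) (M-1) := by
  rw [map_sum]
  have : ∀ m ∈ Finset.Icc M j, Polynomial.derivative (bernsteinPolynomial ℝ j m)
      = (j : Polynomial ℝ) * (bernsteinPolynomial ℝ (j-1) (m-1) - bernsteinPolynomial ℝ (j-1) m) := by
    intro m hm
    simp only [Finset.mem_Icc] at hm
    have hm1 : m = (m - 1) + 1 := by omega
    rw [hm1, bernsteinPolynomial.derivative_succ]
    congr 1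
  rw [Finset.sum_congr rfl this, ← Finset.mul_sum]
  congr 1
  have hIcc : Finset.Icc M j = Finset.Ico M (j+1) := by rw [Finset.Ico_add_one_right_eq_Icc]
  rw [hIcc, Finset.sum_Ico_eq_sum_range]
  have : ∀ i ∈ Finset.range (j + 1 - M),
      (bernsteinPolynomial ℝ (j-1) (M + i - 1) - bernsteinPolynomial ℝ (j-1) (M + i))
        = ((fun i => bernsteinPolynomial ℝ (j-1) (M - 1 + i)) i
          - (fun i => bernsteinPolynomial ℝ (j-1) (M - 1 + i)) (i+1)) := by
    intro i _
    simp only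
    congr 2 <;> omega
  rw [Finset.sum_congr rfl this, Finset.sum_range_sub']
  simp only [add_zero]
  have : bernsteinPolynomial ℝ (j-1) (M - 1 + (j + 1 - M)) = 0 := by
    apply bernsteinPolynomial.eq_zero_of_lt; omega
  rw [this, sub_zero]

lemma binomialTail_monotoneOn (j M : ℕ) (hM : 1 ≤ M) :
    MonotoneOn (binomialTail j M) (Set.Icc (0:ℝ) 1) := by
  by_cases hMj : M ≤ j
  · have heq : ∀ x : ℝ, binomialTail j M x
        = (∑ m ∈ Finset.Icc M j, bernsteinPolynomial ℝ j m).eval x := binomialTail_eq_eval j M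
    have hcont : ContinuousOn (binomialTail j M) (Set.Icc (0:ℝ) 1) := by
      simp only [funext heq]
      exact (Polynomial.continuous _).continuousOn
    apply monotoneOn_of_deriv_nonneg (convex_Icc 0 1) hcont
    · intro x hx
      rw [funext heq]
      exact (Polynomial.differentiable _).differentiableAt.differentiableWithinAt
    · intro x hx
      rw [interior_Icc] at hx
      rw [funext heq, Polynomial.deriv, tail_derivative j M hM hMj]
      simp only [Polynomial.eval_mul, Polynomial.eval_natCast]
      apply mul_nonneg (by positivity)
      simp only [bernsteinPolynomial, Polynomial.eval_mul, Polynomial.eval_pow,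
        Polynomial.eval_natCast, Polynomial.eval_X, Polynomial.eval_sub, Polynomial.eval_one]
      have h1 : (0:ℝ) ≤ 1 - x := by linarith [hx.2]
      have h0 : (0:ℝ) ≤ x := le_of_lt hx.1
      positivity
  · intro x hx y hy hxy
    have : Finset.Icc M j = ∅ := by rw [Finset.Icc_eq_empty]; omega
    simp [binomialTail, this]

/-- The cascade map `G` has at least one fixed point in `[0,1]^ℕ`
(Knaster–Tarski). -/
theorem cascadeMap_exists_fixedPoint
    (P Q ρ0 : ℕ → ℕ → ℝ) (M : ℕ → ℕ → ℕ)
    (hP : ∀ j k, 0 ≤ P j k) (hPsum : HasSum (fun p : ℕ × ℕ => P p.1 p.2) 1)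
    (hPplus : ∀ k, 0 < Pplus P k)
    (hQ : ∀ k j, 0 ≤ Q k j) (hQsum : HasSum (fun p : ℕ × ℕ => Q p.1 p.2) 1)
    (hQminus : ∀ j, 0 < Qminus Q j)
    (hρ0 : ∀ j k, ρ0 j k ∈ Set.Icc (0 : ℝ) 1)
    (hM : ∀ j k, 1 ≤ M j k) :
    ∃ ainf : ℕ → ℝ, (∀ j, ainf j ∈ Set.Icc (0 : ℝ) 1) ∧
      ∀ j, cascadeMap P Q ρ0 M ainf j = ainf j := by
  haveI : Fact ((0:ℝ) ≤ 1) := ⟨zero_le_one⟩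
  have hPcol : ∀ k, Summable fun j => P j k := fun k =>
    hPsum.summable.comp_injective (i := fun j => (j, k))
      (fun a b h => (Prod.ext_iff.mp h).1)
  have hQcol : ∀ j, Summable fun k => Q k j := fun j =>
    hQsum.summable.comp_injective (i := fun k => (k, j))
      (fun a b h => (Prod.ext_iff.mp h).1)
  -- basic bounds on the inner term
  have hcoef_nonneg : ∀ j' k, 0 ≤ (1 - ρ0 j' k) * (P j' k / Pplus P k) := by
    intro j' k
    have h1 := (hρ0 j' k).2
    exact mul_nonneg (by linarith) (div_nonneg (hP j' k) (hPplus k).le)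
  have hcoef_le : ∀ j' k, (1 - ρ0 j' k) * (P j' k / Pplus P k) ≤ P j' k / Pplus P k := by
    intro j' k
    have h0 := (hρ0 j' k).1
    have hp : 0 ≤ P j' k / Pplus P k := div_nonneg (hP j' k) (hPplus k).le
    nlinarith
  have hterm_nonneg : ∀ (a : ℕ → ℝ), (∀ i, a i ∈ Set.Icc (0:ℝ) 1) → ∀ k j',
      0 ≤ (1 - ρ0 j' k) * (P j' k / Pplus P k) * binomialTail j' (M j' k) (a j') := by
    intro a ha k j'
    exact mul_nonneg (hcoef_nonneg j' k) (binomialTail_nonneg (ha j'))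
  have hterm_le : ∀ (a : ℕ → ℝ), (∀ i, a i ∈ Set.Icc (0:ℝ) 1) → ∀ k j',
      (1 - ρ0 j' k) * (P j' k / Pplus P k) * binomialTail j' (M j' k) (a j')
        ≤ (1 - ρ0 j' k) * (P j' k / Pplus P k) :=
    fun a ha k j' => mul_le_of_le_one_right (hcoef_nonneg j' k) (binomialTail_le_one (ha j'))
  have hcoef_summable : ∀ k, Summable fun j' => (1 - ρ0 j' k) * (P j' k / Pplus P k) :=
    fun k => Summable.of_nonneg_of_le (hcoef_nonneg · k) (hcoef_le · k)
      ((hPcol k).div_const _)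
  have hterm_summable : ∀ (a : ℕ → ℝ), (∀ i, a i ∈ Set.Icc (0:ℝ) 1) → ∀ k,
      Summable fun j' => (1 - ρ0 j' k) * (P j' k / Pplus P k) * binomialTail j' (M j' k) (a j') :=
    fun a ha k => Summable.of_nonneg_of_le (hterm_nonneg a ha k) (hterm_le a ha k)
      (hcoef_summable k)
  have hsigma0_nonneg : ∀ k, 0 ≤ sigma0 P ρ0 k := by
    intro k
    apply div_nonneg _ (hPplus k).le
    exact tsum_nonneg fun j' => mul_nonneg (hρ0 j' k).1 (hP j' k)
  have hs1 : ∀ k, Summable fun j' => ρ0 j' k * P j' k / Pplus P k := by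
    intro k
    apply Summable.of_nonneg_of_le
      (fun j' => div_nonneg (mul_nonneg (hρ0 j' k).1 (hP j' k)) (hPplus k).le)
      (fun j' => ?_) ((hPcol k).div_const (Pplus P k))
    have h1 := (hρ0 j' k).2
    have h0 := (hρ0 j' k).1
    have hp := hP j' k
    have : ρ0 j' k * P j' k ≤ P j' k := by nlinarith
    exact (div_le_div_iff_of_pos_right (hPplus k)).mpr this
  -- bracket bounds
  have hbracket_nonneg : ∀ (a : ℕ → ℝ), (∀ i, a i ∈ Set.Icc (0:ℝ) 1) → ∀ k,
      0 ≤ sigma0 P ρ0 k +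
        ∑' j', (1 - ρ0 j' k) * (P j' k / Pplus P k) * binomialTail j' (M j' k) (a j') :=
    fun a ha k => add_nonneg (hsigma0_nonneg k) (tsum_nonneg (hterm_nonneg a ha k))
  have hbracket_le_one : ∀ (a : ℕ → ℝ), (∀ i, a i ∈ Set.Icc (0:ℝ) 1) → ∀ k,
      sigma0 P ρ0 k +
        ∑' j', (1 - ρ0 j' k) * (P j' k / Pplus P k) * binomialTail j' (M j' k) (a j') ≤ 1 := by
    intro a ha k
    have step1 : (∑' j', (1 - ρ0 j' k) * (P j' k / Pplus P k) * binomialTail j' (M j' k) (a j'))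
        ≤ ∑' j', (1 - ρ0 j' k) * (P j' k / Pplus P k) :=
      Summable.tsum_le_tsum (hterm_le a ha k) (hterm_summable a ha k) (hcoef_summable k)
    have hsig : sigma0 P ρ0 k = ∑' j', ρ0 j' k * P j' k / Pplus P k := by
      rw [sigma0, ← tsum_div_const]
    have hadd : (∑' j', ρ0 j' k * P j' k / Pplus P k)
        + (∑' j', (1 - ρ0 j' k) * (P j' k / Pplus P k))
        = ∑' j', P j' k / Pplus P k := by
      rw [← Summable.tsum_add (hs1 k) (hcoef_summable k)]
      apply tsum_congr; intro j'; ring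
    have hfull : (∑' j', P j' k / Pplus P k) = 1 := by
      rw [tsum_div_const]
      exact div_self (hPplus k).ne'
    calc sigma0 P ρ0 k + _ ≤ sigma0 P ρ0 k + ∑' j', (1 - ρ0 j' k) * (P j' k / Pplus P k) := by
          linarith [step1]
      _ = 1 := by rw [hsig, hadd, hfull]
  -- Q-level summability
  have hQterm_summable : ∀ (a : ℕ → ℝ), (∀ i, a i ∈ Set.Icc (0:ℝ) 1) → ∀ j,
      Summable fun k => Q k j * (sigma0 P ρ0 k +
        ∑' j', (1 - ρ0 j' k) * (P j' k / Pplus P k) * binomialTail j' (M j' k) (a j')) := by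
    intro a ha j
    apply Summable.of_nonneg_of_le
      (fun k => mul_nonneg (hQ k j) (hbracket_nonneg a ha k))
      (fun k => mul_le_of_le_one_right (hQ k j) (hbracket_le_one a ha k))
      (hQcol j)
  -- range of the cascade map
  have key : ∀ (a : ℕ → ℝ), (∀ i, a i ∈ Set.Icc (0:ℝ) 1) → ∀ j,
      cascadeMap P Q ρ0 M a j ∈ Set.Icc (0:ℝ) 1 := by
    intro a ha j
    have hq := hQminus j
    constructor
    · apply mul_nonneg (one_div_nonneg.mpr hq.le)
      exact tsum_nonneg fun k => mul_nonneg (hQ k j) (hbracket_nonneg a ha k)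
    · have hts : (∑' k, Q k j * (sigma0 P ρ0 k +
          ∑' j', (1 - ρ0 j' k) * (P j' k / Pplus P k) * binomialTail j' (M j' k) (a j')))
          ≤ Qminus Q j := by
        rw [Qminus]
        exact Summable.tsum_le_tsum (fun k => mul_le_of_le_one_right (hQ k j) (hbracket_le_one a ha k))
          (hQterm_summable a ha j) (hQcol j)
      rw [cascadeMap]
      calc (1 / Qminus Q j) * _ ≤ (1 / Qminus Q j) * Qminus Q j := by
            apply mul_le_mul_of_nonneg_left hts (one_div_nonneg.mpr hq.le)
        _ = 1 := by rw [one_div, inv_mul_cancel₀ hq.ne']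
  -- monotonicity
  have mono : ∀ (a b : ℕ → ℝ), (∀ i, a i ∈ Set.Icc (0:ℝ) 1) → (∀ i, b i ∈ Set.Icc (0:ℝ) 1) →
      (∀ i, a i ≤ b i) → ∀ j, cascadeMap P Q ρ0 M a j ≤ cascadeMap P Q ρ0 M b j := by
    intro a b ha hb hab j
    rw [cascadeMap, cascadeMap]
    apply mul_le_mul_of_nonneg_left _ (one_div_nonneg.mpr (hQminus j).le)
    apply Summable.tsum_le_tsum _ (hQterm_summable a ha j) (hQterm_summable b hb j)
    intro k
    apply mul_le_mul_of_nonneg_left _ (hQ k j)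
    apply add_le_add_right
    apply Summable.tsum_le_tsum _ (hterm_summable a ha k) (hterm_summable b hb k)
    intro j'
    apply mul_le_mul_of_nonneg_left _ (hcoef_nonneg j' k)
    exact binomialTail_monotoneOn j' (M j' k) (hM j' k) (ha j') (hb j') (hab j')
  -- Knaster–Tarski
  let F : (ℕ → Set.Icc (0:ℝ) 1) →o (ℕ → Set.Icc (0:ℝ) 1) :=
    ⟨fun a j => ⟨cascadeMap P Q ρ0 M (fun i => (a i : ℝ)) j,
        key _ (fun i => (a i).2) j⟩,
     fun a b hab j => Subtype.mk_le_mk.mpr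
       (mono _ _ (fun i => (a i).2) (fun i => (b i).2) (fun i => hab i) j)⟩
  refine ⟨fun j => (OrderHom.lfp F j : ℝ), fun j => (OrderHom.lfp F j).2, fun j => ?_⟩
  exact congrArg Subtype.val (congrFun (OrderHom.map_lfp F) j)
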